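/- In the setting of the previous abstraction with weights: let $(X_i, V_i)$, $i=1,\ldots,n+1$, be such that conditional on the unordered multiset of data values $\{z_1,\ldots,z_{n+1}\}$, the index occupied by the test point is $i$ with probability $w(x_i)/\sum_j w(x_j)$ for a positive function $w$. Let $v^*_i$ be permutation-equivariant statistics. If almost surely $\sum_{i=1}^{n+1} \frac{w(X_i)}{\sum_{j=1}^{n+1} w(X_j)} \mathbb{1}\{V_i \le v^*_i\} \ge \alpha$, then $\mathbb{P}\{V_{n+1} \le v^*_{n+1}\} \ge \alpha$. -/

import Mathlib

open MeasureTheory Finset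

/-- Theorem 5 (localized conformal prediction under covariate shift), abstract form:
the data vector `z = ((X_i, V_i))_{i≤n+1}` is weighted-exchangeable, i.e. its law `μ`
is obtained from an exchangeable law `ν` by reweighting with `w(X_{n+1})` (so that,
conditional on the unordered data, index `i` is the test point with probability
`w(X_i)/∑_j w(X_j)`).  If the `w`-weighted average coverage of the
permutation-equivariant thresholds `v*_i` is a.s. at least `α`, then
`P(V_{n+1} ≤ v*_{n+1}) ≥ α`. -/
theorem stmt_11 (n : ℕ) (ν : Measure (Fin (n + 1) → ℝ × ℝ)) [IsProbabilityMeasure ν]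
    (hνexch : ∀ σ : Equiv.Perm (Fin (n + 1)),
      Measure.map (fun z => fun i => z (σ i)) ν = ν)
    (w : ℝ → ℝ) (hwpos : ∀ x, 0 < w x) (hwmeas : Measurable w)
    (c : ℝ) (hc : c = ∫ z, w (z (Fin.last n)).1 ∂ν) (hc0 : 0 < c)
    (μ : Measure (Fin (n + 1) → ℝ × ℝ))
    (hμ : μ = ν.withDensity (fun z => ENNReal.ofReal (w (z (Fin.last n)).1 / c)))
    (vstar : Fin (n + 1) → (Fin (n + 1) → ℝ × ℝ) → ℝ)
    (hvmeas : ∀ i, Measurable (vstar i))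
    (hequiv : ∀ (σ : Equiv.Perm (Fin (n + 1))) (z : Fin (n + 1) → ℝ × ℝ) (i : Fin (n + 1)),
      vstar i (fun j => z (σ j)) = vstar (σ i) z)
    (α : ℝ) (hα : α ∈ Set.Ioo (0:ℝ) 1)
    (hcov : ∀ᵐ z ∂μ,
      α ≤ ∑ i, (w (z i).1 / ∑ j, w (z j).1) *
        (if (z i).2 ≤ vstar i z then (1 : ℝ) else 0)) :
    ENNReal.ofReal α ≤ μ {z | (z (Fin.last n)).2 ≤ vstar (Fin.last n) z} := by
  classical
  -- abbreviations
  set S : (Fin (n + 1) → ℝ × ℝ) → ℝ := fun z => ∑ j, w (z j).1 with hS_def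
  set ind : Fin (n + 1) → (Fin (n + 1) → ℝ × ℝ) → ℝ :=
    fun i z => if (z i).2 ≤ vstar i z then (1 : ℝ) else 0 with hind_def
  set h : Fin (n + 1) → (Fin (n + 1) → ℝ × ℝ) → ℝ :=
    fun i z => (w (z i).1 / S z) * ind i z with hh_def
  set g : (Fin (n + 1) → ℝ × ℝ) → ℝ := fun z => w (z (Fin.last n)).1 with hg_def
  have hSpos : ∀ z, 0 < S z := fun z =>
    Finset.sum_pos (fun j _ => hwpos _) ⟨Fin.last n, Finset.mem_univ _⟩
  have hindnn : ∀ i z, 0 ≤ ind i z := fun i z => by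
    simp only [hind_def]; split <;> norm_num
  have hhnn : ∀ i z, 0 ≤ h i z := fun i z =>
    mul_nonneg (div_nonneg (hwpos _).le (hSpos z).le) (hindnn i z)
  -- measurability
  have mS : Measurable S :=
    Finset.measurable_sum _ fun j _ => hwmeas.comp ((measurable_pi_apply j).fst)
  have mind : ∀ i, Measurable (ind i) := fun i =>
    Measurable.ite (measurableSet_le ((measurable_pi_apply i).snd) (hvmeas i))
      measurable_const measurable_const
  have mh : ∀ i, Measurable (h i) := fun i =>
    ((hwmeas.comp ((measurable_pi_apply i).fst)).div mS).mul (mind i)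
  have mg : Measurable g := hwmeas.comp ((measurable_pi_apply _).fst)
  have mA : MeasurableSet {z : Fin (n + 1) → ℝ × ℝ | (z (Fin.last n)).2 ≤ vstar (Fin.last n) z} :=
    measurableSet_le ((measurable_pi_apply _).snd) (hvmeas _)
  have hdens : Measurable fun z => ENNReal.ofReal (g z / c) :=
    (mg.div measurable_const).ennreal_ofReal
  -- exchangeability for lintegrals
  have mT : ∀ σ : Equiv.Perm (Fin (n + 1)),
      Measurable (fun z : Fin (n + 1) → ℝ × ℝ => fun i => z (σ i)) :=
    fun σ => measurable_pi_lambda _ fun i => measurable_pi_apply _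
  have lexch : ∀ (σ : Equiv.Perm (Fin (n + 1))) (F : (Fin (n + 1) → ℝ × ℝ) → ENNReal),
      Measurable F → ∫⁻ z, F z ∂ν = ∫⁻ z, F (fun i => z (σ i)) ∂ν := by
    intro σ F hF
    conv_lhs => rw [← hνexch σ]
    rw [lintegral_map hF (mT σ)]
  -- g is integrable
  have hgint : Integrable g ν := by
    by_contra h'
    rw [integral_undef h'] at hc
    exact hc0.ne' hc
  have hlg : ∫⁻ z, ENNReal.ofReal (g z) ∂ν = ENNReal.ofReal c := by
    rw [hc, ofReal_integral_eq_lintegral_ofReal hgint (ae_of_all _ fun z => (hwpos _).le)]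
  -- μ is a probability measure
  have hμuniv : μ Set.univ = 1 := by
    rw [hμ, withDensity_apply _ MeasurableSet.univ, Measure.restrict_univ]
    have e1 : ∀ z : Fin (n + 1) → ℝ × ℝ,
        ENNReal.ofReal (g z / c) = ENNReal.ofReal (g z) * ENNReal.ofReal c⁻¹ := fun z => by
      rw [div_eq_mul_inv, ENNReal.ofReal_mul (hwpos _).le]
    show ∫⁻ z, ENNReal.ofReal (g z / c) ∂ν = 1
    simp_rw [e1]
    rw [lintegral_mul_const _ mg.ennreal_ofReal, hlg, ← ENNReal.ofReal_mul hc0.le,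
      mul_inv_cancel₀ hc0.ne', ENNReal.ofReal_one]
  -- main chain
  have step1 : ENNReal.ofReal α ≤ ∫⁻ z, ENNReal.ofReal (∑ i, h i z) ∂μ := by
    have : ∫⁻ _, ENNReal.ofReal α ∂μ = ENNReal.ofReal α := by
      rw [lintegral_const, hμuniv, mul_one]
    rw [← this]
    refine lintegral_mono_ae (hcov.mono fun z hz => ENNReal.ofReal_le_ofReal ?_)
    simpa [hh_def, hind_def, hS_def] using hz
  have step2 : ∫⁻ z, ENNReal.ofReal (∑ i, h i z) ∂μ
      = ∑ i, ∫⁻ z, ENNReal.ofReal (h i z) ∂μ := by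
    have e : ∀ z, ENNReal.ofReal (∑ i, h i z) = ∑ i, ENNReal.ofReal (h i z) := fun z =>
      ENNReal.ofReal_sum_of_nonneg fun i _ => hhnn i z
    simp_rw [e]
    exact lintegral_finset_sum _ fun i _ => (mh i).ennreal_ofReal
  -- key: per-index identity via swap
  have key : ∀ i, ∫⁻ z, ENNReal.ofReal (h i z) ∂μ
      = ∫⁻ z, ENNReal.ofReal ((w (z i).1 / c) * h (Fin.last n) z) ∂ν := by
    intro i
    rw [hμ, lintegral_withDensity_eq_lintegral_mul _ hdens (mh i).ennreal_ofReal]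
    have e1 : ∀ z : Fin (n + 1) → ℝ × ℝ,
        ((fun z => ENNReal.ofReal (g z / c)) * fun z => ENNReal.ofReal (h i z)) z
          = ENNReal.ofReal ((g z / c) * h i z) := fun z => by
      rw [Pi.mul_apply]; exact (ENNReal.ofReal_mul (div_nonneg (hwpos _).le hc0.le)).symm
    simp_rw [e1]
    have := lexch (Equiv.swap i (Fin.last n))
      (fun z => ENNReal.ofReal ((g z / c) * h i z))
      (((mg.div measurable_const).mul (mh i)).ennreal_ofReal)
    rw [this]
    refine lintegral_congr fun z => ?_
    congr 1
    have hσi : (Equiv.swap i (Fin.last n)) i = Fin.last n := Equiv.swap_apply_left _ _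
    have hσl : (Equiv.swap i (Fin.last n)) (Fin.last n) = i := Equiv.swap_apply_right _ _
    have hSe : S (fun j => z ((Equiv.swap i (Fin.last n)) j)) = S z := by
      simp only [hS_def]
      exact Equiv.sum_comp (Equiv.swap i (Fin.last n)) (fun j => w (z j).1)
    have hve : vstar i (fun j => z ((Equiv.swap i (Fin.last n)) j)) = vstar (Fin.last n) z := by
      rw [hequiv, hσi]
    simp only [hg_def, hh_def, hind_def, hσi, hσl, hSe, hve]
    try ring
  have step3 : ∑ i, ∫⁻ z, ENNReal.ofReal (h i z) ∂μ
      = ∫⁻ z, ENNReal.ofReal ((g z / c) * ind (Fin.last n) z) ∂ν := by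
    simp_rw [key]
    have hls := lintegral_finset_sum (μ := ν)
      (f := fun i (z : Fin (n + 1) → ℝ × ℝ) =>
        ENNReal.ofReal (w (z i).1 / c * h (Fin.last n) z)) Finset.univ
      (fun i _ => Measurable.ennreal_ofReal
        (((hwmeas.comp ((measurable_pi_apply i).fst)).div measurable_const).mul
          (mh (Fin.last n))))
    rw [← hls]
    refine lintegral_congr fun z => ?_
    rw [← ENNReal.ofReal_sum_of_nonneg (fun i _ =>
      mul_nonneg (div_nonneg (hwpos _).le hc0.le) (hhnn _ z))]
    congr 1
    rw [← Finset.sum_mul, ← Finset.sum_div]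
    have hSz := (hSpos z).ne'
    simp only [hh_def, hg_def, hS_def] at *
    field_simp
  have step4 : ∫⁻ z, ENNReal.ofReal ((g z / c) * ind (Fin.last n) z) ∂ν
      = μ {z | (z (Fin.last n)).2 ≤ vstar (Fin.last n) z} := by
    rw [hμ, withDensity_apply _ mA, ← lintegral_indicator mA]
    refine lintegral_congr fun z => ?_
    by_cases hz : (z (Fin.last n)).2 ≤ vstar (Fin.last n) z
    · simp [Set.indicator_of_mem, hz, hind_def, Set.mem_setOf_eq]; rfl
    · simp [Set.indicator_of_notMem, hz, hind_def, Set.mem_setOf_eq]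
  calc ENNReal.ofReal α ≤ ∫⁻ z, ENNReal.ofReal (∑ i, h i z) ∂μ := step1
    _ = ∑ i, ∫⁻ z, ENNReal.ofReal (h i z) ∂μ := step2
    _ = _ := by rw [step3, step4]
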